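/- For every integer t ≥ 1 it holds that q(t) ≥ d/(2d−1); consequently β(t) · q(t) = d/(2d−1) (equivalently, min(q(t), α) = α) for every t ≥ 1. -/

import Mathlib

/-- For the FI-CBB ex-ante availability probabilities `q` and non-skipping
probabilities `β` of an arm with blocking delay `d` and LP sampling mass `z ≤ 1/d`,
one has `q t ≥ d/(2d-1)` for every `t ≥ 1`, and consequently
`β t * q t = d/(2d-1)` for every `t ≥ 1`. -/
theorem ficbb_availability_lower_bound (d : ℕ) (hd : 1 ≤ d) (z : ℝ)
    (hz0 : 0 ≤ z) (hz1 : z ≤ 1 / (d : ℝ))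
    (q β : ℕ → ℝ)
    (hq1 : q 1 = 1)
    (hβ : ∀ t, 1 ≤ t → β t = min 1 (((d : ℝ) / (2 * (d : ℝ) - 1)) / q t))
    (hrec : ∀ t, 1 ≤ t → q (t + 1) =
      q t * (1 - β t * z) +
        (if d ≤ t then q (t - d + 1) * β (t - d + 1) * z else 0)) :
    ∀ t, 1 ≤ t →
      (d : ℝ) / (2 * (d : ℝ) - 1) ≤ q t ∧
      β t * q t = (d : ℝ) / (2 * (d : ℝ) - 1) := by
  set α : ℝ := (d : ℝ) / (2 * (d : ℝ) - 1) with hα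
  have hD : (1 : ℝ) ≤ (d : ℝ) := by exact_mod_cast hd
  have h2D : (0 : ℝ) < 2 * (d : ℝ) - 1 := by linarith
  have hαpos : 0 < α := div_pos (by linarith) h2D
  have hα1 : α ≤ 1 := by
    rw [hα, div_le_one h2D]; linarith
  have hid : ((d : ℝ) - 1) * (α * (1 / (d : ℝ))) = 1 - α := by
    have h2D' : (2 * (d : ℝ) - 1) ≠ 0 := ne_of_gt h2D
    have hd0 : (d : ℝ) ≠ 0 := by linarith
    rw [hα, div_mul_div_comm, mul_one, mul_comm (2 * (d : ℝ) - 1), ← div_div, div_self hd0,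
      eq_sub_iff_add_eq, ← mul_div_assoc, mul_one, ← add_div, div_eq_one_iff_eq h2D']
    ring
  have hbound : ∀ t, 1 ≤ t → α ≤ 1 - (((min t d : ℕ) : ℝ) - 1) * (α * z) := by
    intro t ht
    have hm1 : (1 : ℝ) ≤ ((min t d : ℕ) : ℝ) := by
      exact_mod_cast le_min ht hd
    have hm2 : ((min t d : ℕ) : ℝ) ≤ (d : ℝ) := by
      exact_mod_cast min_le_right t d
    have h1 : α * z ≤ α * (1 / (d : ℝ)) :=
      mul_le_mul_of_nonneg_left hz1 hαpos.le
    have h2 : 0 ≤ α * z := mul_nonneg hαpos.le hz0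
    have h3 : (((min t d : ℕ) : ℝ) - 1) * (α * z) ≤ ((d : ℝ) - 1) * (α * z) :=
      mul_le_mul_of_nonneg_right (by linarith) h2
    have h4 : ((d : ℝ) - 1) * (α * z) ≤ ((d : ℝ) - 1) * (α * (1 / (d : ℝ))) :=
      mul_le_mul_of_nonneg_left h1 (by linarith)
    linarith
  -- if q s equals the formula, then β s * q s = α
  have hβq : ∀ s, 1 ≤ s → q s = 1 - (((min s d : ℕ) : ℝ) - 1) * (α * z) →
      β s * q s = α := by
    intro s hs hqs
    have hges : α ≤ q s := hqs ▸ hbound s hs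
    have hqpos : 0 < q s := lt_of_lt_of_le hαpos hges
    have hβs : β s = α / q s := by
      rw [hβ s hs, min_eq_right]
      exact (div_le_one hqpos).mpr hges
    rw [hβs, div_mul_cancel₀ _ (ne_of_gt hqpos)]
  have key : ∀ t, 1 ≤ t → q t = 1 - (((min t d : ℕ) : ℝ) - 1) * (α * z) := by
    intro t
    induction t using Nat.strong_induction_on with
    | _ t ih =>
      intro ht
      rcases Nat.exists_eq_add_of_le ht with ⟨s, rfl⟩
      rcases Nat.eq_zero_or_pos s with rfl | hs
      · simp [hq1, Nat.min_eq_left hd]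
      · have hs1 : 1 ≤ s := hs
        have hqs := ih s (by omega) hs1
        have hβqs := hβq s hs1 hqs
        have hrecs := hrec s hs1
        have h1s : 1 + s = s + 1 := by omega
        rw [h1s] at *
        by_cases hds : d ≤ s
        · have hu1 : 1 ≤ s - d + 1 := by omega
          have hqu := ih (s - d + 1) (by omega) hu1
          have hβqu := hβq (s - d + 1) hu1 hqu
          rw [hrecs, if_pos hds]
          have hmins : min s d = d := Nat.min_eq_right hds
          have hmins1 : min (s + 1) d = d := Nat.min_eq_right (by omega)
          rw [hmins1]
          rw [hmins] at hqs
          nlinarith [hβqs, hβqu, hqs]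
        · have hmins : min s d = s := Nat.min_eq_left (by omega)
          have hmins1 : min (s + 1) d = s + 1 := Nat.min_eq_left (by omega)
          rw [hrecs, if_neg hds, hmins1]
          rw [hmins] at hqs
          push_cast
          nlinarith [hβqs, hqs]
  intro t ht
  have hqt := key t ht
  have hge : α ≤ q t := hqt ▸ hbound t ht
  exact ⟨hge, hβq t ht hqt⟩
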